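/- arXiv:1007.3292 — 5 statements merged into one kernel-verified Lean document; each statement's English description precedes it below -/
import Mathlib

section
/- Let α, β, γ be finite nonempty types. Let p be a probability mass function on α and let K : α → (probability mass functions on β) and L : β → (probability mass functions on γ) be transition kernels, so that (A, B, C) forms a Markov chain with A ~ p, B ~ K(A), C ~ L(B). Let q(b) = Σ_a p(a)·K(a)(b) be the marginal of B and r(c) = Σ_b q(b)·L(b)(c) be the marginal of C. Then for every a ∈ α: Σ_c |(Σ_b K(a)(b)·L(b)(c)) − r(c)| ≤ (Σ_b |K(a)(b) − q(b)|) · max_{b ∈ β} Σ_c |L(b)(c) − r(c)|. (Here Σ_b K(a)(b)·L(b)(c) is the conditional distribution of C given A = a.) -/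
/-- Along a Markov chain `A → B → C` with `A ~ p`, `B ~ K(A)`,
`C ~ L(B)`, for every `a` the TV distance of the conditional law of `C` given
`A = a` from the marginal of `C` is at most the TV distance of the conditional
law of `B` given `A = a` from the marginal of `B`, times the maximum over `b`
of the TV distance of `L(b)` from the marginal of `C`. -/
theorem markov_chain_tv_serial
    {α β γ : Type*} [Fintype α] [Fintype β] [Fintype γ]
    [Nonempty α] [Nonempty β] [Nonempty γ]
    (p : α → ℝ) (K : α → β → ℝ) (L : β → γ → ℝ)
    (hp : ∀ a, 0 ≤ p a) (hps : ∑ a, p a = 1)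
    (hK : ∀ a b, 0 ≤ K a b) (hKs : ∀ a, ∑ b, K a b = 1)
    (hL : ∀ b c, 0 ≤ L b c) (hLs : ∀ b, ∑ c, L b c = 1)
    (q : β → ℝ) (hq : ∀ b, q b = ∑ a, p a * K a b)
    (r : γ → ℝ) (hr : ∀ c, r c = ∑ b, q b * L b c)
    (a : α) :
    ∑ c, |(∑ b, K a b * L b c) - r c| ≤
      (∑ b, |K a b - q b|) *
        (Finset.univ.sup' Finset.univ_nonempty fun b => ∑ c, |L b c - r c|) := by
  set M := Finset.univ.sup' Finset.univ_nonempty fun b => ∑ c, |L b c - r c| with hM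
  have hqs : ∑ b, q b = 1 := by
    simp_rw [hq]
    rw [Finset.sum_comm]
    simp_rw [← Finset.mul_sum, hKs, mul_one]
    exact hps
  have hzero : ∑ b, (K a b - q b) = 0 := by
    rw [Finset.sum_sub_distrib, hKs, hqs, sub_self]
  have key : ∀ c, (∑ b, K a b * L b c) - r c
      = ∑ b, (K a b - q b) * (L b c - r c) := by
    intro c
    have : ∑ b, (K a b - q b) * (L b c - r c)
        = (∑ b, K a b * L b c) - (∑ b, q b * L b c)
          - (∑ b, (K a b - q b)) * r c := by
      rw [Finset.sum_mul, ← Finset.sum_sub_distrib, ← Finset.sum_sub_distrib]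
      congr 1; ext b; ring
    rw [this, hzero, zero_mul, sub_zero, hr]
  calc ∑ c, |(∑ b, K a b * L b c) - r c|
      = ∑ c, |∑ b, (K a b - q b) * (L b c - r c)| := by simp_rw [key]
    _ ≤ ∑ c, ∑ b, |K a b - q b| * |L b c - r c| := by
        refine Finset.sum_le_sum fun c _ => ?_
        refine (Finset.abs_sum_le_sum_abs _ _).trans ?_
        simp [abs_mul]
    _ = ∑ b, |K a b - q b| * ∑ c, |L b c - r c| := by
        rw [Finset.sum_comm]; simp_rw [Finset.mul_sum]
    _ ≤ ∑ b, |K a b - q b| * M := by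
        refine Finset.sum_le_sum fun b _ => ?_
        exact mul_le_mul_of_nonneg_left
          (Finset.le_sup' (fun b => ∑ c, |L b c - r c|) (Finset.mem_univ b))
          (abs_nonneg _)
    _ = (∑ b, |K a b - q b|) * M := by rw [← Finset.sum_mul]
end

section
/- Let k ≥ 1 and let p₁, …, p_k ∈ [0, 1] be real numbers such that Π_{i=1}^k p_i + Π_{i=1}^k (1 − p_i) > 0. Define q = (Π_{i=1}^k p_i) / (Π_{i=1}^k p_i + Π_{i=1}^k (1 − p_i)). Then |q − 1/2| ≤ Σ_{i=1}^k |p_i − 1/2|. -/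
lemma key_ineq (u v : ℝ) (hu1 : -(1/2) ≤ u) (hu2 : u ≤ 1/2)
    (hv1 : -(1/2) ≤ v) (hv2 : v ≤ 1/2) :
    |u + v| ≤ (1 + 4 * u * v) * (|u| + |v|) := by
  rcases le_or_gt 0 u with hu | hu <;> rcases le_or_gt 0 v with hv | hv
  · rw [abs_of_nonneg hu, abs_of_nonneg hv, abs_of_nonneg (by linarith)]
    nlinarith [mul_nonneg (mul_nonneg hu hv) (add_nonneg hu hv)]
  · rw [abs_of_nonneg hu, abs_of_neg hv]
    rcases abs_cases (u + v) with ⟨h, h'⟩ | ⟨h, h'⟩ <;> rw [h]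
    · nlinarith [mul_nonneg (neg_nonneg.2 hv.le) (show 0 ≤ 1 - 2*u*(u - v) by
        nlinarith [mul_nonneg hu (show 0 ≤ 1 - (u - v) by linarith),
          mul_nonneg (show 0 ≤ 1/2 - u by linarith) (show 0 ≤ u - v by linarith)])]
    · nlinarith [mul_nonneg hu (show 0 ≤ 1 - 2*(-v)*(u - v) by
        nlinarith [mul_nonneg (neg_nonneg.2 hv.le) (show 0 ≤ 1 - (u - v) by linarith),
          mul_nonneg (show 0 ≤ 1/2 + v by linarith) (show 0 ≤ u - v by linarith)])]
  · rw [abs_of_neg hu, abs_of_nonneg hv]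
    rcases abs_cases (u + v) with ⟨h, h'⟩ | ⟨h, h'⟩ <;> rw [h]
    · nlinarith [mul_nonneg (neg_nonneg.2 hu.le) (show 0 ≤ 1 - 2*v*(v - u) by
        nlinarith [mul_nonneg hv (show 0 ≤ 1 - (v - u) by linarith),
          mul_nonneg (show 0 ≤ 1/2 - v by linarith) (show 0 ≤ v - u by linarith)])]
    · nlinarith [mul_nonneg hv (show 0 ≤ 1 - 2*(-u)*(v - u) by
        nlinarith [mul_nonneg (neg_nonneg.2 hu.le) (show 0 ≤ 1 - (v - u) by linarith),
          mul_nonneg (show 0 ≤ 1/2 + u by linarith) (show 0 ≤ v - u by linarith)])]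
  · rw [abs_of_neg hu, abs_of_neg hv, abs_of_neg (by linarith)]
    nlinarith [mul_nonneg (mul_nonneg (neg_nonneg.2 hu.le) (neg_nonneg.2 hv.le))
      (add_nonneg (neg_nonneg.2 hu.le) (neg_nonneg.2 hv.le))]

/-- Core two-variable inequality. -/
lemma core_ineq (x y : ℝ) (hx0 : 0 ≤ x) (hx1 : x ≤ 1) (hy0 : 0 ≤ y) (hy1 : y ≤ 1)
    (hD : 0 < x * y + (1 - x) * (1 - y)) :
    |x * y / (x * y + (1 - x) * (1 - y)) - 1 / 2| ≤ |x - 1 / 2| + |y - 1 / 2| := by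
  have h : x * y / (x * y + (1 - x) * (1 - y)) - 1 / 2
      = (x + y - 1) / (2 * (x * y + (1 - x) * (1 - y))) := by
    field_simp
    ring
  have hden : |2 * (x * y + (1 - x) * (1 - y))| = 2 * (x * y + (1 - x) * (1 - y)) :=
    abs_of_pos (by linarith)
  rw [h, abs_div, hden, div_le_iff₀ (by linarith)]
  have e1 : x + y - 1 = (x - 1/2) + (y - 1/2) := by ring
  have e2 : 2 * (x * y + (1 - x) * (1 - y)) = 1 + 4 * (x - 1/2) * (y - 1/2) := by ring
  rw [e1, e2, mul_comm]
  have := key_ineq (x - 1/2) (y - 1/2) (by linarith) (by linarith) (by linarith) (by linarith)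
  convert this using 3

lemma aux (k : ℕ) (p : Fin k → ℝ)
    (hp0 : ∀ i, 0 ≤ p i) (hp1 : ∀ i, p i ≤ 1)
    (hpos : 0 < (∏ i, p i) + ∏ i, (1 - p i)) :
    |(∏ i, p i) / ((∏ i, p i) + ∏ i, (1 - p i)) - 1 / 2| ≤ ∑ i, |p i - 1 / 2| := by
  induction k with
  | zero => norm_num
  | succ n ih =>
    set a := ∏ i : Fin n, p i.castSucc with ha
    set b := ∏ i : Fin n, (1 - p i.castSucc) with hb
    set c := p (Fin.last n) with hc
    have hPa : (∏ i, p i) = a * c := by rw [Fin.prod_univ_castSucc]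
    have hPb : (∏ i, (1 - p i)) = b * (1 - c) := by rw [Fin.prod_univ_castSucc]
    have ha0 : 0 ≤ a := Finset.prod_nonneg fun i _ => hp0 _
    have hb0 : 0 ≤ b := Finset.prod_nonneg fun i _ => by linarith [hp1 i.castSucc]
    have hc0 : 0 ≤ c := hp0 _
    have hc1 : c ≤ 1 := hp1 _
    have hpos' : 0 < a * c + b * (1 - c) := by rw [hPa, hPb] at hpos; exact hpos
    have hab : 0 < a + b := by
      rcases lt_or_eq_of_le ha0 with h | h
      · linarith
      rcases lt_or_eq_of_le hb0 with h' | h'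
      · linarith
      nlinarith
    set x := a / (a + b) with hx
    have hx0 : 0 ≤ x := div_nonneg ha0 hab.le
    have hx1 : x ≤ 1 := by rw [hx, div_le_one hab]; linarith
    have hxb : 1 - x = b / (a + b) := by rw [hx]; field_simp; ring
    have hDx : x * c + (1 - x) * (1 - c) = (a * c + b * (1 - c)) / (a + b) := by
      rw [hxb, hx]; field_simp
    have hDxpos : 0 < x * c + (1 - x) * (1 - c) := by
      rw [hDx]; positivity
    have heq : (a * c) / (a * c + b * (1 - c))
        = x * c / (x * c + (1 - x) * (1 - c)) := by
      rw [hDx, hx]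
      rw [div_div_eq_mul_div, div_mul_eq_mul_div, div_mul_cancel₀ _ hab.ne']
    have hIH := ih (fun i => p i.castSucc) (fun i => hp0 _) (fun i => hp1 _) (by rw [← ha, ← hb]; linarith)
    have hcore := core_ineq x c hx0 hx1 hc0 hc1 hDxpos
    calc |(∏ i, p i) / ((∏ i, p i) + ∏ i, (1 - p i)) - 1 / 2|
        = |x * c / (x * c + (1 - x) * (1 - c)) - 1 / 2| := by rw [hPa, hPb, heq]
      _ ≤ |x - 1 / 2| + |c - 1 / 2| := hcore
      _ ≤ (∑ i : Fin n, |p i.castSucc - 1 / 2|) + |c - 1 / 2| := by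
          refine add_le_add_left ?_ _
          simpa [ha, hb] using hIH
      _ = ∑ i : Fin (n + 1), |p i - 1 / 2| := by rw [Fin.sum_univ_castSucc]

/-- For `p₁, …, p_k ∈ [0,1]` with
`∏ pᵢ + ∏ (1 − pᵢ) > 0`, the normalized product
`q = ∏ pᵢ / (∏ pᵢ + ∏ (1 − pᵢ))` satisfies
`|q − 1/2| ≤ Σᵢ |pᵢ − 1/2|`. -/
theorem normalized_product_dist_from_half
    (k : ℕ) (hk : 1 ≤ k) (p : Fin k → ℝ)
    (hp0 : ∀ i, 0 ≤ p i) (hp1 : ∀ i, p i ≤ 1)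
    (hpos : 0 < (∏ i, p i) + ∏ i, (1 - p i)) :
    |(∏ i, p i) / ((∏ i, p i) + ∏ i, (1 - p i)) - 1 / 2| ≤ ∑ i, |p i - 1 / 2| := by
  exact aux k p hp0 hp1 hpos
end

section
/- Let k ≥ 1, let P : {0,1}^k → {0,1} be a predicate, let V be a finite set with |V| = n, let ε > 0, and let (e_j)_{j<m} be a family of injective tuples e_j : Fin k → V with m > n·ln 2/(2ε²). Then there exist literal vectors b_0, …, b_{m−1} ∈ {0,1}^k such that in the resulting instance of CSP(P), every assignment a : V → {0,1} satisfies at most (|P^{−1}(1)|/2^k + ε)·m constraints; equivalently, any set of constraints whose removal leaves a satisfiable instance has size at least (|P^{−1}(0)|/2^k − ε)·m. -/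
open Real Finset

lemma bern_mgf (p : ℝ) (hp0 : 0 ≤ p) (t : ℝ) (ht : 0 ≤ t) :
    1 - p + p * exp t ≤ exp (p * t + t ^ 2 / 8) := by
  set u : ℝ → ℝ := fun x => 1 - p + p * exp x with hu
  have hupos : ∀ x, 0 ≤ x → 1 ≤ u x := by
    intro x hx
    have : 1 ≤ exp x := one_le_exp hx
    simp only [hu]
    nlinarith
  have hud : ∀ x, HasDerivAt u (p * exp x) x := by
    intro x
    exact ((Real.hasDerivAt_exp x).const_mul p).const_add (1 - p)
  -- φ' = ψ
  set ψ : ℝ → ℝ := fun x => p + x / 4 - p * exp x / u x with hψ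
  set φ : ℝ → ℝ := fun x => p * x + x ^ 2 / 8 - Real.log (u x) with hφ
  have hψd : ∀ x, 0 ≤ x → HasDerivAt ψ (1 / 4 - (p * exp x * u x - p * exp x * (p * exp x)) / (u x) ^ 2) x := by
    intro x hx
    have hne : u x ≠ 0 := by have := hupos x hx; positivity
    have h1 : HasDerivAt (fun y => p * exp y / u y) ((p * exp x * u x - p * exp x * (p * exp x)) / (u x) ^ 2) x :=
      ((Real.hasDerivAt_exp x).const_mul p).div (hud x) hne
    have h2 : HasDerivAt (fun y : ℝ => p + y / 4) (1 / 4) x := by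
      simpa using ((hasDerivAt_id x).div_const 4).const_add p
    exact h2.sub h1
  have hψmono : MonotoneOn ψ (Set.Ici (0:ℝ)) := by
    apply monotoneOn_of_deriv_nonneg (convex_Ici 0)
    · apply ContinuousOn.sub (by fun_prop)
      apply ContinuousOn.div (by fun_prop) (by fun_prop)
      intro x hx; have := hupos x hx; positivity
    · intro x hx
      simp only [interior_Ici, Set.mem_Ioi] at hx
      exact (hψd x hx.le).differentiableAt.differentiableWithinAt
    · intro x hx
      simp only [interior_Ici, Set.mem_Ioi] at hx
      rw [(hψd x hx.le).deriv]
      have h1 : 1 ≤ u x := hupos x hx.le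
      have hex : 0 < exp x := exp_pos x
      have key : (p * exp x * u x - p * exp x * (p * exp x)) / (u x) ^ 2 ≤ 1 / 4 := by
        rw [div_le_iff₀ (by positivity)]
        have : u x = 1 - p + p * exp x := rfl
        nlinarith [sq_nonneg ((1 - p) - p * exp x)]
      linarith
  have hψ0 : ψ 0 = 0 := by simp [hψ, hu]
  have hψnonneg : ∀ x, 0 ≤ x → 0 ≤ ψ x := by
    intro x hx
    have := hψmono (Set.self_mem_Ici) (Set.mem_Ici.2 hx) hx
    rwa [hψ0] at this
  have hφd : ∀ x, 0 ≤ x → HasDerivAt φ (ψ x) x := by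
    intro x hx
    have hne : u x ≠ 0 := by have := hupos x hx; positivity
    have h1 : HasDerivAt (fun y => Real.log (u y)) (p * exp x / u x) x := (hud x).log hne
    have h2 : HasDerivAt (fun y : ℝ => p * y + y ^ 2 / 8) (p + x / 4) x := by
      have := ((hasDerivAt_pow 2 x).div_const 8).const_add 0
      have h3 : HasDerivAt (fun y : ℝ => p * y) p x := by simpa using (hasDerivAt_id x).const_mul p
      have h4 : HasDerivAt (fun y : ℝ => y ^ 2 / 8) (x / 4) x := by
        have := (hasDerivAt_pow 2 x).div_const 8
        refine this.congr_deriv ?_; norm_num; ring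
      exact h3.add h4
    exact h2.sub h1
  have hφmono : MonotoneOn φ (Set.Ici (0:ℝ)) := by
    apply monotoneOn_of_deriv_nonneg (convex_Ici 0)
    · apply ContinuousOn.sub (by fun_prop)
      apply ContinuousOn.log (by fun_prop)
      intro x hx; have := hupos x hx; positivity
    · intro x hx
      simp only [interior_Ici, Set.mem_Ioi] at hx
      exact (hφd x hx.le).differentiableAt.differentiableWithinAt
    · intro x hx
      simp only [interior_Ici, Set.mem_Ioi] at hx
      rw [(hφd x hx.le).deriv]
      exact hψnonneg x hx.le
  have hφ0 : φ 0 = 0 := by simp [hφ, hu]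
  have hφt : 0 ≤ φ t := by
    have := hφmono (Set.self_mem_Ici) (Set.mem_Ici.2 ht) ht
    rwa [hφ0] at this
  have h1 : 1 ≤ u t := hupos t ht
  have : Real.log (u t) ≤ p * t + t ^ 2 / 8 := by simp only [hφ] at hφt; linarith
  calc u t = exp (Real.log (u t)) := (exp_log (by linarith)).symm
    _ ≤ exp (p * t + t ^ 2 / 8) := exp_le_exp.2 this

/-- If `m > n·ln 2/(2ε²)` then there exist literal vectors
`b_0, …, b_{m−1} ∈ {0,1}^k` such that every assignment satisfies at most
`(|P⁻¹(1)|/2^k + ε)·m` constraints of the resulting CSP(P) instance;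
equivalently, any set of constraints whose removal leaves a satisfiable
instance has size at least `(|P⁻¹(0)|/2^k − ε)·m`. -/
theorem exists_far_instance
    (k : ℕ) (hk : 1 ≤ k) (P : (Fin k → ZMod 2) → ZMod 2)
    {V : Type*} [Fintype V] [DecidableEq V] (n : ℕ) (hn : Fintype.card V = n)
    (ε : ℝ) (hε : 0 < ε) (m : ℕ) (e : Fin m → Fin k → V)
    (hinj : ∀ j, Function.Injective (e j))
    (hm : (n : ℝ) * Real.log 2 / (2 * ε ^ 2) < m) :
    ∃ b : Fin m → Fin k → ZMod 2,
      (∀ a : V → ZMod 2,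
        ((Finset.univ.filter (fun j : Fin m =>
            P (fun i => a (e j i) + b j i) = 1)).card : ℝ) ≤
          (((Finset.univ.filter (fun z : Fin k → ZMod 2 => P z = 1)).card : ℝ) / 2 ^ k + ε) * m) ∧
      (∀ R : Finset (Fin m),
        (∃ a : V → ZMod 2, ∀ j, j ∉ R → P (fun i => a (e j i) + b j i) = 1) →
          (((Finset.univ.filter (fun z : Fin k → ZMod 2 => P z = 0)).card : ℝ) / 2 ^ k - ε) * m
            ≤ (R.card : ℝ)) := by
  classical
  set s : ℕ := (Finset.univ.filter (fun z : Fin k → ZMod 2 => P z = 1)).card with hs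
  have hcard2k : Fintype.card (Fin k → ZMod 2) = 2 ^ k := by
    simp [Fintype.card_fun]
  have hsle : s ≤ 2 ^ k := by
    rw [hs, ← hcard2k]; exact (Finset.card_filter_le _ _).trans (le_of_eq (Finset.card_univ))
  set p : ℝ := (s : ℝ) / 2 ^ k with hp
  have hp0 : 0 ≤ p := by positivity
  set t : ℝ := 4 * ε with htdef
  have ht0 : 0 < t := by positivity
  set X : (V → ZMod 2) → (Fin m → Fin k → ZMod 2) → ℕ := fun a b =>
    (Finset.univ.filter (fun j : Fin m => P (fun i => a (e j i) + b j i) = 1)).card with hX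
  set θ : ℝ := (p + ε) * m with hθ
  -- Step A: moment generating function computation
  have stepA : ∀ a : V → ZMod 2,
      ∑ b : Fin m → Fin k → ZMod 2, exp (t * (X a b : ℝ)) =
        (((2 ^ k - s : ℕ) : ℝ) + (s : ℝ) * exp t) ^ m := by
    intro a
    have hterm : ∀ b : Fin m → Fin k → ZMod 2, exp (t * (X a b : ℝ)) =
        ∏ j : Fin m, (if P (fun i => a (e j i) + b j i) = 1 then exp t else 1) := by
      intro b
      have hXsum : (X a b : ℝ) =
          ∑ j : Fin m, (if P (fun i => a (e j i) + b j i) = 1 then (1:ℝ) else 0) := by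
        simp only [hX, Finset.card_filter]; push_cast; ring_nf
      rw [hXsum, Finset.mul_sum, Real.exp_sum]
      refine Finset.prod_congr rfl (fun j _ => ?_)
      split <;> simp
    simp_rw [hterm]
    rw [← Fintype.prod_sum (f := fun (j : Fin m) (y : Fin k → ZMod 2) => if P (fun i => a (e j i) + y i) = 1 then Real.exp t else 1)]
    have hone : ∀ j : Fin m,
        (∑ x : Fin k → ZMod 2, if P (fun i => a (e j i) + x i) = 1 then exp t else 1) =
          ((2 ^ k - s : ℕ) : ℝ) + (s : ℝ) * exp t := by
      intro j
      have hre : (∑ x : Fin k → ZMod 2, if P (fun i => a (e j i) + x i) = 1 then exp t else 1) =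
          ∑ y : Fin k → ZMod 2, (if P y = 1 then exp t else 1) := by
        apply Fintype.sum_equiv (Equiv.addLeft (fun i => a (e j i)))
        intro x; rfl
      rw [hre, Finset.sum_ite, Finset.sum_const, Finset.sum_const]
      have hnot : (Finset.univ.filter (fun z : Fin k → ZMod 2 => ¬ P z = 1)).card = 2 ^ k - s := by
        have := Finset.card_filter_add_card_filter_not
          (s := (Finset.univ : Finset (Fin k → ZMod 2))) (p := fun z => P z = 1)
        rw [Finset.card_univ, hcard2k] at this
        omega
      rw [hnot, ← hs]
      push_cast
      ring
    rw [Finset.prod_congr rfl (fun j _ => hone j), Finset.prod_const, Finset.card_univ,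
      Fintype.card_fin]

  -- Step B: Markov bound for each assignment
  set Bad : (V → ZMod 2) → Finset (Fin m → Fin k → ZMod 2) := fun a =>
    Finset.univ.filter (fun b => θ < (X a b : ℝ)) with hBad
  have stepB : ∀ a : V → ZMod 2,
      ((Bad a).card : ℝ) * exp (t * θ) ≤ (((2 ^ k - s : ℕ) : ℝ) + (s : ℝ) * exp t) ^ m := by
    intro a
    rw [← stepA a]
    calc ((Bad a).card : ℝ) * exp (t * θ)
        = ∑ _b ∈ Bad a, exp (t * θ) := by rw [Finset.sum_const, nsmul_eq_mul]
      _ ≤ ∑ b ∈ Bad a, exp (t * (X a b : ℝ)) := by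
          apply Finset.sum_le_sum
          intro b hb
          have hbθ : θ < (X a b : ℝ) := (Finset.mem_filter.1 hb).2
          exact exp_le_exp.2 (by nlinarith)
      _ ≤ ∑ b : Fin m → Fin k → ZMod 2, exp (t * (X a b : ℝ)) :=
          Finset.sum_le_sum_of_subset_of_nonneg (Finset.subset_univ _)
            (fun b _ _ => (exp_pos _).le)
  -- Step C: per-assignment bound
  have hq0 : (0:ℝ) ≤ ((2 ^ k - s : ℕ) : ℝ) + (s : ℝ) * exp t := by positivity
  have h2k : ((2:ℝ) ^ k) > 0 := by positivity
  have stepC : (((2 ^ k - s : ℕ) : ℝ) + (s : ℝ) * exp t) ^ m ≤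
      ((2:ℝ) ^ k) ^ m * exp ((p * t + t ^ 2 / 8) * m) := by
    have hbase : ((2 ^ k - s : ℕ) : ℝ) + (s : ℝ) * exp t ≤ 2 ^ k * exp (p * t + t ^ 2 / 8) := by
      have hb := bern_mgf p hp0 t ht0.le
      have hcast : ((2 ^ k - s : ℕ) : ℝ) = 2 ^ k - s := by
        push_cast [Nat.cast_sub hsle]; ring
      have hps : (s : ℝ) = p * 2 ^ k := by rw [hp]; field_simp
      rw [hcast, hps]
      nlinarith
    calc (((2 ^ k - s : ℕ) : ℝ) + (s : ℝ) * exp t) ^ m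
        ≤ (2 ^ k * exp (p * t + t ^ 2 / 8)) ^ m := pow_le_pow_left₀ hq0 hbase m
      _ = ((2:ℝ) ^ k) ^ m * exp ((p * t + t ^ 2 / 8) * m) := by
          rw [mul_pow, ← Real.exp_nat_mul]; ring_nf
  have hBadBound : ∀ a : V → ZMod 2,
      ((Bad a).card : ℝ) ≤ ((2:ℝ) ^ k) ^ m * exp (-(2 * ε ^ 2) * m) := by
    intro a
    have h1 : ((Bad a).card : ℝ) * exp (t * θ) ≤ ((2:ℝ) ^ k) ^ m * exp ((p * t + t ^ 2 / 8) * m) :=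
      (stepB a).trans stepC
    have hexp : ((2:ℝ) ^ k) ^ m * exp ((p * t + t ^ 2 / 8) * m) =
        (((2:ℝ) ^ k) ^ m * exp (-(2 * ε ^ 2) * m)) * exp (t * θ) := by
      rw [mul_assoc, ← Real.exp_add]
      congr 2
      rw [hθ, htdef]; ring
    rw [hexp] at h1
    exact le_of_mul_le_mul_right h1 (exp_pos _)
  -- Step D: the exponential is small
  have stepD : ((2:ℝ) ^ n) * exp (-(2 * ε ^ 2) * m) < 1 := by
    have hεsq : (0:ℝ) < 2 * ε ^ 2 := by positivity
    have hlt : (n : ℝ) * Real.log 2 < 2 * ε ^ 2 * m := by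
      rw [div_lt_iff₀ hεsq] at hm; linarith
    have h2n : ((2:ℝ) ^ n) = exp (n * Real.log 2) := by
      rw [Real.exp_nat_mul, Real.exp_log two_pos]
    rw [h2n, ← Real.exp_add, ← Real.exp_zero]
    apply Real.exp_lt_exp.2
    nlinarith
  -- Step E: union bound, existence of a good b
  set GBad : Finset (Fin m → Fin k → ZMod 2) :=
    Finset.univ.filter (fun b => ∃ a : V → ZMod 2, θ < (X a b : ℝ)) with hGBad
  have hGsub : GBad ⊆ Finset.univ.biUnion Bad := by
    intro b hb
    obtain ⟨a, ha⟩ := (Finset.mem_filter.1 hb).2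
    exact Finset.mem_biUnion.2 ⟨a, Finset.mem_univ _, Finset.mem_filter.2 ⟨Finset.mem_univ _, ha⟩⟩
  have hGcard : ((GBad.card : ℝ)) < ((2:ℝ) ^ k) ^ m := by
    have h1 : (GBad.card : ℝ) ≤ ∑ a : V → ZMod 2, ((Bad a).card : ℝ) := by
      have := (Finset.card_le_card hGsub).trans (Finset.card_biUnion_le)
      calc (GBad.card : ℝ) ≤ ((∑ a : V → ZMod 2, (Bad a).card : ℕ) : ℝ) := by exact_mod_cast this
        _ = ∑ a : V → ZMod 2, ((Bad a).card : ℝ) := by push_cast; rfl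
    have h2 : ∑ a : V → ZMod 2, ((Bad a).card : ℝ) ≤
        ((2:ℝ) ^ n) * (((2:ℝ) ^ k) ^ m * exp (-(2 * ε ^ 2) * m)) := by
      calc ∑ a : V → ZMod 2, ((Bad a).card : ℝ)
          ≤ ∑ _a : V → ZMod 2, ((2:ℝ) ^ k) ^ m * exp (-(2 * ε ^ 2) * m) :=
            Finset.sum_le_sum (fun a _ => hBadBound a)
        _ = ((2:ℝ) ^ n) * (((2:ℝ) ^ k) ^ m * exp (-(2 * ε ^ 2) * m)) := by
            rw [Finset.sum_const, nsmul_eq_mul, Finset.card_univ, Fintype.card_fun, hn,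
              ZMod.card 2]
            push_cast; ring
    have h3 : ((2:ℝ) ^ n) * (((2:ℝ) ^ k) ^ m * exp (-(2 * ε ^ 2) * m)) < ((2:ℝ) ^ k) ^ m := by
      have hpos : (0:ℝ) < ((2:ℝ) ^ k) ^ m := by positivity
      nlinarith [stepD]
    linarith
  have hexists : ∃ b : Fin m → Fin k → ZMod 2, ∀ a : V → ZMod 2, (X a b : ℝ) ≤ θ := by
    by_contra hcon
    push_neg at hcon
    have hall : GBad = Finset.univ := by
      apply Finset.eq_univ_of_forall
      intro b
      obtain ⟨a, ha⟩ := hcon b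
      exact Finset.mem_filter.2 ⟨Finset.mem_univ _, a, ha⟩
    rw [hall, Finset.card_univ] at hGcard
    have : Fintype.card (Fin m → Fin k → ZMod 2) = (2 ^ k) ^ m := by
      simp [Fintype.card_fun, hcard2k]
    rw [this] at hGcard
    push_cast at hGcard
    linarith
  obtain ⟨b, hb⟩ := hexists
  refine ⟨b, fun a => ?_, fun R hR => ?_⟩
  · exact (hb a).trans_eq (by rw [hθ, hp, hs])
  · obtain ⟨a, ha⟩ := hR
    have hsub : Finset.univ \ R ⊆
        Finset.univ.filter (fun j : Fin m => P (fun i => a (e j i) + b j i) = 1) := by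
      intro j hj
      rw [Finset.mem_sdiff] at hj
      exact Finset.mem_filter.2 ⟨Finset.mem_univ _, ha j hj.2⟩
    have hcards : (Finset.univ \ R).card = m - R.card := by
      rw [Finset.card_sdiff_of_subset (Finset.subset_univ R), Finset.card_univ, Fintype.card_fin]
    have hRm : R.card ≤ m := by
      simpa using Finset.card_le_card (Finset.subset_univ R)
    have h1 : ((m : ℝ) - R.card) ≤ (X a b : ℝ) := by
      have := Finset.card_le_card hsub
      rw [hcards] at this
      have : ((m - R.card : ℕ) : ℝ) ≤ (X a b : ℝ) := by exact_mod_cast this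
      rwa [Nat.cast_sub hRm] at this
    have h2 : (X a b : ℝ) ≤ θ := hb a
    have hq : ((Finset.univ.filter (fun z : Fin k → ZMod 2 => P z = 0)).card : ℝ) = 2 ^ k - s := by
      have hiff : ∀ z : Fin k → ZMod 2, P z = 0 ↔ ¬ P z = 1 := by
        intro z
        constructor
        · intro h h1; rw [h] at h1; exact one_ne_zero h1.symm
        · intro h
          have hd : ∀ x : ZMod 2, x = 0 ∨ x = 1 := by decide
          rcases hd (P z) with h0 | h1
          · exact h0
          · exact absurd h1 h
      rw [Finset.filter_congr (fun z _ => hiff z)]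
      have := Finset.card_filter_add_card_filter_not
        (s := (Finset.univ : Finset (Fin k → ZMod 2))) (p := fun z => P z = 1)
      rw [Finset.card_univ, hcard2k] at this
      have hnat : (Finset.univ.filter (fun z : Fin k → ZMod 2 => ¬ P z = 1)).card = 2 ^ k - s := by
        omega
      rw [hnat, Nat.cast_sub hsle]
      push_cast; ring
    rw [hq]
    have hps : (s : ℝ) = p * 2 ^ k := by rw [hp]; field_simp
    rw [hθ] at h2
    have hfin : ((2:ℝ) ^ k - s) / 2 ^ k = 1 - p := by
      rw [hps]; field_simp
    rw [hfin]
    linarith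
end

section
/- Let k ≥ 2 and let Φ be an instance of k-EQU over a variable set V with |V| = n in which each variable appears in at most d constraints. Let φ(Φ) be the instance of 2-EQU over the same variable set V obtained by replacing each constraint of Φ, whose literals are ℓ₁, …, ℓ_k, by the k(k−1)/2 constraints ℓ_i = ℓ_j for 1 ≤ i < j ≤ k. Then: (i) if Φ is satisfiable then φ(Φ) is satisfiable; (ii) if φ(Φ) can be made satisfiable by deleting some set of t of its constraints, then Φ can be made satisfiable by deleting at most t constraints; in particular, if every set of constraints of Φ whose removal leaves a satisfiable instance has size at least ε·d·n/k, then every set of constraints of φ(Φ) whose removal leaves a satisfiable instance has size at least ε·d·n/k. -/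
/-- The reduction `φ` from `k`-EQU to `2`-EQU replacing each
constraint with literals `ℓ₁, …, ℓ_k` by the `k(k−1)/2` constraints
`ℓ_i = ℓ_j` (`i < j`) preserves satisfiability, and deleting `t` constraints of
`φ(Φ)` to reach satisfiability can be simulated by deleting at most `t`
constraints of `Φ`; in particular `(ε·d·n/k)`-farness is preserved.
A `k`-EQU constraint with variables `e j` and literal vector `b j` is satisfied
by `a` iff all literals `a (e j i) + b j i` take the same value. -/
theorem kEQU_to_2EQU_reduction
    (k : ℕ) (hk : 2 ≤ k)
    {V : Type*} [Fintype V] [DecidableEq V] (n : ℕ) (hn : Fintype.card V = n)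
    (d : ℕ) (ε : ℝ)
    (m : ℕ) (e : Fin m → Fin k → V) (hinj : ∀ j, Function.Injective (e j))
    (b : Fin m → Fin k → ZMod 2)
    -- each variable appears in at most `d` constraints of `Φ`
    (hdeg : ∀ v : V,
      (Finset.univ.filter (fun j : Fin m => ∃ i, e j i = v)).card ≤ d) :
    -- (i) satisfiability is preserved
    ((∃ a : V → ZMod 2, ∀ j : Fin m, ∀ i i' : Fin k,
        a (e j i) + b j i = a (e j i') + b j i') →
      ∃ a : V → ZMod 2, ∀ c : Fin m × {p : Fin k × Fin k // p.1 < p.2},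
        a (e c.1 c.2.val.1) + b c.1 c.2.val.1 = a (e c.1 c.2.val.2) + b c.1 c.2.val.2) ∧
    -- (ii) a deletion set for `φ(Φ)` yields one of at most the same size for `Φ`
    (∀ T : Finset (Fin m × {p : Fin k × Fin k // p.1 < p.2}),
      (∃ a : V → ZMod 2, ∀ c, c ∉ T →
          a (e c.1 c.2.val.1) + b c.1 c.2.val.1 = a (e c.1 c.2.val.2) + b c.1 c.2.val.2) →
      ∃ S : Finset (Fin m), S.card ≤ T.card ∧
        ∃ a : V → ZMod 2, ∀ j, j ∉ S → ∀ i i' : Fin k,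
          a (e j i) + b j i = a (e j i') + b j i') ∧
    -- in particular, farness is preserved
    ((∀ S : Finset (Fin m),
        (∃ a : V → ZMod 2, ∀ j, j ∉ S → ∀ i i' : Fin k,
          a (e j i) + b j i = a (e j i') + b j i') →
        ε * d * n / k ≤ (S.card : ℝ)) →
      ∀ T : Finset (Fin m × {p : Fin k × Fin k // p.1 < p.2}),
        (∃ a : V → ZMod 2, ∀ c, c ∉ T →
          a (e c.1 c.2.val.1) + b c.1 c.2.val.1 = a (e c.1 c.2.val.2) + b c.1 c.2.val.2) →
        ε * d * n / k ≤ (T.card : ℝ)) := by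

  have key : ∀ T : Finset (Fin m × {p : Fin k × Fin k // p.1 < p.2}),
      (∃ a : V → ZMod 2, ∀ c, c ∉ T →
          a (e c.1 c.2.val.1) + b c.1 c.2.val.1 = a (e c.1 c.2.val.2) + b c.1 c.2.val.2) →
      ∃ S : Finset (Fin m), S.card ≤ T.card ∧
        ∃ a : V → ZMod 2, ∀ j, j ∉ S → ∀ i i' : Fin k,
          a (e j i) + b j i = a (e j i') + b j i' := by
    intro T ⟨a, ha⟩
    refine ⟨T.image Prod.fst, Finset.card_image_le, a, ?_⟩
    intro j hj i i'
    have h : ∀ i i' : Fin k, i < i' → a (e j i) + b j i = a (e j i') + b j i' := by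
      intro i i' hlt
      have : (j, (⟨(i, i'), hlt⟩ : {p : Fin k × Fin k // p.1 < p.2})) ∉ T := by
        intro hmem
        exact hj (Finset.mem_image_of_mem Prod.fst hmem)
      exact ha _ this
    rcases lt_trichotomy i i' with hlt | heq | hgt
    · exact h i i' hlt
    · rw [heq]
    · exact (h i' i hgt).symm
  refine ⟨?_, key, ?_⟩
  · rintro ⟨a, ha⟩
    exact ⟨a, fun c => ha c.1 c.2.val.1 c.2.val.2⟩
  · intro hfar T hT
    obtain ⟨S, hS, hsat⟩ := key T hT
    calc ε * d * n / k ≤ (S.card : ℝ) := hfar S hsat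
    _ ≤ (T.card : ℝ) := by exact_mod_cast hS
end

section
/- Let k, h ≥ 1 and let A be an h × k matrix over F₂ such that every nonzero vector in the row space of A (i.e., every vᵀA with v ∈ F₂^h, v ≠ 0) has Hamming weight at least 3. Let H be a k-uniform hypergraph on a vertex set V with |V| = n, with edges given as injective tuples e : Fin k → V, and suppose H is a (γ, η)-expander with η < 1/2. For each edge e define the linear map L_e : (V → F₂) → F₂^h by L_e(x) = A · (x(e(1)), …, x(e(k)))ᵀ. Then for every set S of at most γ·n edges of H and every family of coefficient vectors (c_e)_{e ∈ S} with c_e ∈ F₂^h not all zero, the linear functional x ↦ Σ_{e ∈ S} c_eᵀ · L_e(x) on F₂^V is not identically zero; equivalently, the h·|S| rows of the stacked constraint matrix corresponding to the edges of S are linearly independent over F₂. -/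
/-- Let `A` be an `h × k` matrix over `F₂` every nonzero
row-space vector of which (i.e. `vᵀA` for `v ≠ 0`) has Hamming weight at least
`3`, and let `H` be a `k`-uniform `(γ, η)`-expander with `η < 1/2`, edges given
as injective tuples `e j`. For each edge `j` and `x : V → F₂` consider the
linear constraints `A · (x(e j 1), …, x(e j k))ᵀ`. Then for every set `S` of
at most `γ·n` edges and coefficient vectors `c_j ∈ F₂^h` not all zero on `S`,
the linear functional `x ↦ Σ_{j ∈ S} c_jᵀ · A · x|_{e j}` is not identically
zero; i.e. the rows of the stacked constraint matrix over `S` are linearly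
independent over `F₂`. -/
theorem hamming_code_expander_rows_independent
    (k h : ℕ) (hk : 1 ≤ k) (hh : 1 ≤ h)
    (A : Matrix (Fin h) (Fin k) (ZMod 2))
    (hdist : ∀ v : Fin h → ZMod 2, v ≠ 0 →
      3 ≤ (Finset.univ.filter (fun i : Fin k => Matrix.vecMul v A i ≠ 0)).card)
    {V : Type*} [Fintype V] [DecidableEq V] (n : ℕ) (hn : Fintype.card V = n)
    (m : ℕ) (e : Fin m → Fin k → V) (hinj : ∀ j, Function.Injective (e j))
    (γ η : ℝ) (hγ : 0 < γ) (hη : η < 1 / 2)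
    (hexp : ∀ S : Finset (Fin m), (S.card : ℝ) ≤ γ * n →
      ((k : ℝ) - 1 - η) * S.card ≤
        ((S.biUnion fun j => Finset.image (e j) Finset.univ).card : ℝ)) :
    ∀ S : Finset (Fin m), (S.card : ℝ) ≤ γ * n →
      ∀ c : Fin m → Fin h → ZMod 2, (∃ j ∈ S, c j ≠ 0) →
        ∃ x : V → ZMod 2,
          (∑ j ∈ S, ∑ r : Fin h, c j r * ∑ i : Fin k, A r i * x (e j i)) ≠ 0 := by
  classical
  intro S hS c hc
  by_contra hxall
  push_neg at hxall
  -- the combined coefficient vector of edge j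
  set w : Fin m → Fin k → ZMod 2 := fun j i => ∑ r, c j r * A r i with hwdef
  have hone : ∀ a : ZMod 2, a ≠ 0 → a = 1 := by decide
  have hw0 : ∀ j, c j = 0 → ∀ i, w j i = 0 := by
    intro j hj i
    simp [hwdef, hj]
  -- rewrite the vanishing of the functional in terms of w
  have hsum : ∀ x : V → ZMod 2, ∑ j ∈ S, ∑ i : Fin k, w j i * x (e j i) = 0 := by
    intro x
    have h0 := hxall x
    rw [← h0]
    refine Finset.sum_congr rfl fun j _ => ?_
    simp only [hwdef, Finset.sum_mul, Finset.mul_sum, mul_assoc]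
    exact Finset.sum_comm
  set T : Finset (Fin m) := S.filter (fun j => c j ≠ 0) with hTdef
  have hTS : T ⊆ S := Finset.filter_subset _ _
  have hT1 : 1 ≤ T.card := by
    obtain ⟨j, hjS, hjc⟩ := hc
    have : j ∈ T := Finset.mem_filter.2 ⟨hjS, hjc⟩
    exact Finset.card_pos.2 ⟨j, this⟩
  -- per-vertex sum
  set g : Fin m → V → ZMod 2 := fun j v => ∑ i, if e j i = v then w j i else 0 with hgdef
  have hg : ∀ j v, g j v = if (∃ i, e j i = v ∧ w j i ≠ 0) then 1 else 0 := by
    intro j v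
    by_cases hp : ∃ i, e j i = v ∧ w j i ≠ 0
    · obtain ⟨i₀, hei, hwi⟩ := hp
      rw [if_pos ⟨i₀, hei, hwi⟩]
      show (∑ i : Fin k, if e j i = v then w j i else 0) = 1
      rw [Finset.sum_eq_single i₀]
      · rw [if_pos hei]; exact hone _ hwi
      · intro i _ hne
        rw [if_neg]
        intro he
        exact hne (hinj j (he.trans hei.symm))
      · intro habs; exact absurd (Finset.mem_univ i₀) habs
    · rw [if_neg hp]
      show (∑ i : Fin k, if e j i = v then w j i else 0) = 0
      apply Finset.sum_eq_zero
      intro i _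
      by_cases he : e j i = v
      · rw [if_pos he]
        by_contra hwne
        exact hp ⟨i, he, hwne⟩
      · rw [if_neg he]
  have hgv : ∀ v : V, ∑ j ∈ T, g j v = 0 := by
    intro v
    have h0 := hsum (fun u => if u = v then 1 else 0)
    have hS0 : ∑ j ∈ S, g j v = 0 := by
      rw [← h0]
      refine Finset.sum_congr rfl fun j _ => ?_
      refine Finset.sum_congr rfl fun i _ => ?_
      by_cases he : e j i = v
      · simp [he]
      · simp [he]
    rw [← hS0, hTdef]
    apply Finset.sum_filter_of_ne
    intro j _ hgj
    intro hcj
    apply hgj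
    rw [hg]
    rw [if_neg]
    rintro ⟨i, -, hwi⟩
    exact hwi (hw0 j hcj i)
  -- d v : number of edges in T covering v at a nonzero position
  set d : V → ℕ := fun v => (T.filter (fun j => ∃ i, e j i = v ∧ w j i ≠ 0)).card with hddef
  have hdeven : ∀ v, 2 ∣ d v := by
    intro v
    have h0 := hgv v
    have : ∑ j ∈ T, g j v = ((T.filter (fun j => ∃ i, e j i = v ∧ w j i ≠ 0)).card : ZMod 2) := by
      rw [← Finset.sum_boole]
      exact Finset.sum_congr rfl fun j _ => hg j v
    rw [this] at h0
    exact (ZMod.natCast_eq_zero_iff _ 2).1 h0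
  set U' : Finset V := T.biUnion (fun j => Finset.image (e j) (Finset.univ.filter (fun i => w j i ≠ 0))) with hU'def
  set U : Finset V := T.biUnion (fun j => Finset.image (e j) Finset.univ) with hUdef
  set wt : Fin m → ℕ := fun j => (Finset.univ.filter (fun i => w j i ≠ 0)).card with hwtdef
  set N : ℕ := ∑ j ∈ T, wt j with hNdef
  -- distance 3
  have h3 : 3 * T.card ≤ N := by
    have hle : T.card • 3 ≤ ∑ j ∈ T, wt j := by
      apply Finset.card_nsmul_le_sum
      intro j hj
      have hcj : c j ≠ 0 := (Finset.mem_filter.1 hj).2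
      have := hdist (c j) hcj
      have hset : (Finset.univ.filter (fun i : Fin k => Matrix.vecMul (c j) A i ≠ 0))
          = (Finset.univ.filter (fun i => w j i ≠ 0)) := by
        apply Finset.filter_congr
        intro i _
        simp [Matrix.vecMul, dotProduct, hwdef]
      rw [hset] at this
      exact this
    rw [hNdef]
    simpa [smul_eq_mul, mul_comm] using hle
  -- double counting: 2 |U'| ≤ N
  have himg : ∀ j ∈ T, Finset.image (e j) (Finset.univ.filter (fun i => w j i ≠ 0))
      = U'.filter (fun v => ∃ i, e j i = v ∧ w j i ≠ 0) := by
    intro j hj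
    ext v
    simp only [Finset.mem_image, Finset.mem_filter, Finset.mem_univ, true_and, hU'def,
      Finset.mem_biUnion]
    constructor
    · rintro ⟨i, hwi, rfl⟩
      exact ⟨⟨j, hj, ⟨i, hwi, rfl⟩⟩, ⟨i, rfl, hwi⟩⟩
    · rintro ⟨-, i, rfl, hwi⟩
      exact ⟨i, hwi, rfl⟩
  have h2 : 2 * U'.card ≤ N := by
    have hNeq : N = ∑ v ∈ U', d v := by
      rw [hNdef]
      have : ∀ j ∈ T, wt j = ∑ v ∈ U', (if (∃ i, e j i = v ∧ w j i ≠ 0) then 1 else 0) := by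
        intro j hj
        show (Finset.univ.filter (fun i => w j i ≠ 0)).card = _
        have hcard : (Finset.univ.filter (fun i => w j i ≠ 0)).card
            = (Finset.image (e j) (Finset.univ.filter (fun i => w j i ≠ 0))).card :=
          (Finset.card_image_of_injective _ (hinj j)).symm
        rw [hcard, himg j hj, Finset.card_filter]
      rw [Finset.sum_congr rfl this, Finset.sum_comm]
      refine Finset.sum_congr rfl fun v _ => ?_
      exact (Finset.card_filter _ _).symm
    have hle2 : U'.card • 2 ≤ ∑ v ∈ U', d v := by
      apply Finset.card_nsmul_le_sum
      intro v hv
      have hpos : 1 ≤ d v := by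
        rw [hU'def] at hv
        obtain ⟨j, hj, hvj⟩ := Finset.mem_biUnion.1 hv
        obtain ⟨i, hi, rfl⟩ := Finset.mem_image.1 hvj
        have hwi : w j i ≠ 0 := (Finset.mem_filter.1 hi).2
        apply Finset.card_pos.2
        exact ⟨j, Finset.mem_filter.2 ⟨hj, ⟨i, rfl, hwi⟩⟩⟩
      exact Nat.le_of_dvd hpos (hdeven v)
    rw [hNeq]
    simpa [smul_eq_mul, mul_comm] using hle2
  -- |U| + N ≤ |U'| + k|T|
  have hUN : U.card + N ≤ U'.card + k * T.card := by
    set Z : Finset V := T.biUnion (fun j => Finset.image (e j) (Finset.univ.filter (fun i => w j i = 0))) with hZdef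
    have hsub : U ⊆ U' ∪ Z := by
      intro v hv
      obtain ⟨j, hj, hvj⟩ := Finset.mem_biUnion.1 hv
      obtain ⟨i, -, rfl⟩ := Finset.mem_image.1 hvj
      by_cases hwi : w j i = 0
      · exact Finset.mem_union_right _ (Finset.mem_biUnion.2
          ⟨j, hj, Finset.mem_image.2 ⟨i, Finset.mem_filter.2 ⟨Finset.mem_univ i, hwi⟩, rfl⟩⟩)
      · exact Finset.mem_union_left _ (Finset.mem_biUnion.2
          ⟨j, hj, Finset.mem_image.2 ⟨i, Finset.mem_filter.2 ⟨Finset.mem_univ i, hwi⟩, rfl⟩⟩)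
    have hUle : U.card ≤ U'.card + Z.card :=
      le_trans (Finset.card_le_card hsub) (Finset.card_union_le _ _)
    have hZle : Z.card + N ≤ k * T.card := by
      have hZ1 : Z.card ≤ ∑ j ∈ T, (Finset.univ.filter (fun i => w j i = 0)).card := by
        refine le_trans (Finset.card_biUnion_le) ?_
        exact Finset.sum_le_sum fun j _ => Finset.card_image_le
      have hcompl : ∀ j, (Finset.univ.filter (fun i => w j i = 0)).card + wt j = k := by
        intro j
        rw [hwtdef]
        have := Finset.card_filter_add_card_filter_not
          (s := (Finset.univ : Finset (Fin k))) (p := fun i => w j i = 0)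
        simpa using this
      calc Z.card + N ≤ (∑ j ∈ T, (Finset.univ.filter (fun i => w j i = 0)).card) + N := by
            omega
        _ = ∑ j ∈ T, ((Finset.univ.filter (fun i => w j i = 0)).card + wt j) := by
            rw [hNdef, Finset.sum_add_distrib]
        _ = ∑ j ∈ T, k := Finset.sum_congr rfl fun j _ => hcompl j
        _ = k * T.card := by rw [Finset.sum_const, smul_eq_mul, mul_comm]
    omega
  -- expansion
  have hexpT : ((k : ℝ) - 1 - η) * T.card ≤ (U.card : ℝ) := by
    apply hexp T
    exact le_trans (by exact_mod_cast Finset.card_le_card hTS) hS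
  -- final arithmetic
  have c2 : (U.card : ℝ) + N ≤ (U'.card : ℝ) + k * T.card := by exact_mod_cast hUN
  have c3 : 2 * (U'.card : ℝ) ≤ N := by exact_mod_cast h2
  have c4 : 3 * (T.card : ℝ) ≤ N := by exact_mod_cast h3
  have c5 : (1 : ℝ) ≤ T.card := by exact_mod_cast hT1
  nlinarith [mul_pos (show (0:ℝ) < 1 - 2*η by linarith) (show (0:ℝ) < T.card by linarith)]
end
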